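/- A Boolean algebra B is injective with respect to embeddings of Boolean algebras (i.e., for every injective Boolean algebra homomorphism f : A → C and every homomorphism g : A → B there is a homomorphism h : C → B with h ∘ f = g) if and only if B is a complete Boolean algebra. -/
import Mathlib

universe u

namespace Stmt5Aux

open Order

variable {A B C : Type u} [BooleanAlgebra A] [BooleanAlgebra B] [BooleanAlgebra C]

/-- Key Boolean identity: complement of `(x ⊓ z) ⊔ (y ⊓ zᶜ)`. -/
lemma compl_combo (x y z : C) : ((x ⊓ z) ⊔ (y ⊓ zᶜ))ᶜ = (xᶜ ⊓ z) ⊔ (yᶜ ⊓ zᶜ) := by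
  apply compl_unique
  · rw [inf_sup_left, inf_sup_right, inf_sup_right]
    rw [eq_bot_iff]
    refine sup_le (sup_le ?_ ?_) (sup_le ?_ ?_)
    · exact le_trans (inf_le_inf inf_le_left inf_le_left) (by simp)
    · exact le_trans (inf_le_inf inf_le_right inf_le_right) (by simp)
    · exact le_trans (inf_le_inf inf_le_right inf_le_right) (by simp)
    · exact le_trans (inf_le_inf inf_le_left inf_le_left) (by simp)
  · rw [sup_sup_sup_comm, ← inf_sup_right, ← inf_sup_right]
    simp

/-- Partial homomorphisms from `C` to `B` extending `g ∘ f⁻¹`, encoded as graphs. -/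
def Good (f : BoundedLatticeHom A C) (g : BoundedLatticeHom A B) (p : Set (C × B)) : Prop :=
  (∀ a : A, (f a, g a) ∈ p) ∧
  (∀ ⦃c : C⦄ ⦃b₁ b₂ : B⦄, (c, b₁) ∈ p → (c, b₂) ∈ p → b₁ = b₂) ∧
  (∀ ⦃c₁ b₁ c₂ b₂⦄, (c₁, b₁) ∈ p → (c₂, b₂) ∈ p → (c₁ ⊔ c₂, b₁ ⊔ b₂) ∈ p) ∧
  (∀ ⦃c b⦄, (c, b) ∈ p → (cᶜ, bᶜ) ∈ p)

variable {f : BoundedLatticeHom A C} {g : BoundedLatticeHom A B} {p : Set (C × B)}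

lemma Good.top_mem (hp : Good f g p) : ((⊤ : C), (⊤ : B)) ∈ p := by
  have := hp.1 ⊤; simpa using this

lemma Good.bot_mem (hp : Good f g p) : ((⊥ : C), (⊥ : B)) ∈ p := by
  have := hp.1 ⊥; simpa using this

lemma Good.inf_mem (hp : Good f g p) {c₁ b₁ c₂ b₂} (h1 : (c₁, b₁) ∈ p) (h2 : (c₂, b₂) ∈ p) :
    (c₁ ⊓ c₂, b₁ ⊓ b₂) ∈ p := by
  have := hp.2.2.2 (hp.2.2.1 (hp.2.2.2 h1) (hp.2.2.2 h2))
  simpa using this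

lemma Good.mono (hp : Good f g p) {c₁ b₁ c₂ b₂} (h1 : (c₁, b₁) ∈ p) (h2 : (c₂, b₂) ∈ p)
    (h : c₁ ≤ c₂) : b₁ ≤ b₂ := by
  have hmem := hp.2.2.1 h1 h2
  rw [sup_eq_right.2 h] at hmem
  have := hp.2.1 hmem h2
  exact le_of_sup_eq this

/-- One-step extension: any good partial hom can be extended to cover a given `c`. -/
lemma Good.extend (hB : ∀ S : Set B, ∃ b, IsLUB S b) (hp : Good f g p) (c : C) :
    ∃ p' : Set (C × B), Good f g p' ∧ p ⊆ p' ∧ ∃ b', (c, b') ∈ p' := by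
  obtain ⟨b, hb⟩ := hB {y | ∃ d, (d, y) ∈ p ∧ d ≤ c}
  -- claim A
  have claimA : ∀ {d y}, (d, y) ∈ p → d ≤ c → y ≤ b := fun h hd => hb.1 ⟨_, h, hd⟩
  -- claim B
  have claimB : ∀ {d y}, (d, y) ∈ p → c ≤ d → b ≤ y := by
    intro d y h hd
    refine hb.2 ?_
    rintro y' ⟨d', h', hd'⟩
    exact hp.mono h' h (hd'.trans hd)
  set p' : Set (C × B) :=
    {q | ∃ d₁ b₁ d₂ b₂, (d₁, b₁) ∈ p ∧ (d₂, b₂) ∈ p ∧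
      q.1 = (d₁ ⊓ c) ⊔ (d₂ ⊓ cᶜ) ∧ q.2 = (b₁ ⊓ b) ⊔ (b₂ ⊓ bᶜ)} with hp'def
  have hsub : p ⊆ p' := by
    rintro ⟨d, y⟩ h
    exact ⟨d, y, d, y, h, h, by rw [← inf_sup_left]; simp, by rw [← inf_sup_left]; simp⟩
  -- well-definedness core
  have hfun : ∀ ⦃x : C⦄ ⦃y₁ y₂ : B⦄, (x, y₁) ∈ p' → (x, y₂) ∈ p' → y₁ = y₂ := by
    rintro x y₁ y₂ ⟨d₁, b₁, d₂, b₂, hd₁, hd₂, hx₁, hy₁⟩ ⟨e₁, β₁, e₂, β₂, he₁, he₂, hx₂, hy₂⟩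
    dsimp only at hx₁ hy₁ hx₂ hy₂
    have hX : (d₁ ⊓ c) ⊔ (d₂ ⊓ cᶜ) = (e₁ ⊓ c) ⊔ (e₂ ⊓ cᶜ) := hx₁ ▸ hx₂
    have h1 : d₁ ⊓ c = e₁ ⊓ c := by
      have := congrArg (· ⊓ c) hX
      simpa [inf_sup_right, inf_assoc, inf_right_comm] using this
    have h2 : d₂ ⊓ cᶜ = e₂ ⊓ cᶜ := by
      have := congrArg (· ⊓ cᶜ) hX
      simpa [inf_sup_right, inf_assoc, inf_right_comm] using this
    -- part 1: for any (d,β),(e,γ) with d ⊓ c ≤ e:  β ⊓ b ≤ γ ⊓ b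
    have part1 : ∀ {d β e γ}, (d, β) ∈ p → (e, γ) ∈ p → d ⊓ c ≤ e → β ⊓ b ≤ γ ⊓ b := by
      intro d β e γ hdβ heγ hle
      have hc : c ≤ e ⊔ dᶜ := by
        have h' : c ≤ d ⇨ e := le_himp_iff.2 (by rwa [inf_comm])
        rwa [himp_eq] at h'
      have hpair : (e ⊔ dᶜ, γ ⊔ βᶜ) ∈ p := hp.2.2.1 heγ (hp.2.2.2 hdβ)
      have hble : b ≤ γ ⊔ βᶜ := claimB hpair hc
      have : β ⊓ b ≤ β ⊓ (γ ⊔ βᶜ) := inf_le_inf_left _ hble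
      rw [inf_sup_left] at this
      simp only [inf_compl_eq_bot, sup_bot_eq] at this
      exact le_inf (this.trans inf_le_right) inf_le_right
    -- part 2: for any (d,β),(e,γ) with d ⊓ cᶜ ≤ e:  β ⊓ bᶜ ≤ γ ⊓ bᶜ
    have part2 : ∀ {d β e γ}, (d, β) ∈ p → (e, γ) ∈ p → d ⊓ cᶜ ≤ e → β ⊓ bᶜ ≤ γ ⊓ bᶜ := by
      intro d β e γ hdβ heγ hle
      have hdc : d ⊓ eᶜ ≤ c := by
        have h' : d ≤ c ⊔ e := by
          have := sdiff_le_iff.1 (show d \ c ≤ e by rwa [sdiff_eq])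
          exact this
        have := sdiff_le_iff.2 (by rwa [sup_comm] at h')
        rwa [sdiff_eq] at this
      have hpair : (d ⊓ eᶜ, β ⊓ γᶜ) ∈ p := hp.inf_mem hdβ (hp.2.2.2 heγ)
      have hble : β ⊓ γᶜ ≤ b := claimA hpair hdc
      have h' : β ≤ γ ⊔ b := by
        have := sdiff_le_iff.1 (show β \ γ ≤ b by rwa [sdiff_eq])
        exact this
      have : β ⊓ bᶜ ≤ (γ ⊔ b) ⊓ bᶜ := inf_le_inf_right _ h'
      rw [inf_sup_right] at this
      simp only [inf_compl_eq_bot, sup_bot_eq] at this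
      exact le_inf (this.trans inf_le_left) inf_le_right
    have e1 : b₁ ⊓ b = β₁ ⊓ b :=
      le_antisymm (part1 hd₁ he₁ (h1.le.trans inf_le_left))
        (part1 he₁ hd₁ (h1.ge.trans inf_le_left))
    have e2 : b₂ ⊓ bᶜ = β₂ ⊓ bᶜ :=
      le_antisymm (part2 hd₂ he₂ (h2.le.trans inf_le_left))
        (part2 he₂ hd₂ (h2.ge.trans inf_le_left))
    rw [hy₁, hy₂, e1, e2]
  refine ⟨p', ⟨fun a => hsub (hp.1 a), hfun, ?_, ?_⟩, hsub, b,
    ⟨⊤, ⊤, ⊥, ⊥, hp.top_mem, hp.bot_mem, by simp, by simp⟩⟩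
  · rintro c₁ b₁ c₂ b₂ ⟨d₁, x₁, d₂, x₂, hd₁, hd₂, hc₁, hb₁⟩ ⟨e₁, y₁, e₂, y₂, he₁, he₂, hc₂, hb₂⟩
    dsimp only at hc₁ hb₁ hc₂ hb₂ ⊢
    refine ⟨d₁ ⊔ e₁, x₁ ⊔ y₁, d₂ ⊔ e₂, x₂ ⊔ y₂, hp.2.2.1 hd₁ he₁, hp.2.2.1 hd₂ he₂, ?_, ?_⟩
    · rw [hc₁, hc₂, inf_sup_right, inf_sup_right, sup_sup_sup_comm]
    · rw [hb₁, hb₂, inf_sup_right, inf_sup_right, sup_sup_sup_comm]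
  · rintro x y ⟨d₁, b₁, d₂, b₂, hd₁, hd₂, hx, hy⟩
    dsimp only at hx hy
    exact ⟨d₁ᶜ, b₁ᶜ, d₂ᶜ, b₂ᶜ, hp.2.2.2 hd₁, hp.2.2.2 hd₂,
      by dsimp only; rw [hx, compl_combo], by dsimp only; rw [hy, compl_combo]⟩

end Stmt5Aux

open Stmt5Aux Order in
theorem stmt5 (B : Type u) [BooleanAlgebra B] :
    (∀ (A C : Type u) [BooleanAlgebra A] [BooleanAlgebra C]
        (f : BoundedLatticeHom A C), Function.Injective f →
        ∀ g : BoundedLatticeHom A B,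
          ∃ h : BoundedLatticeHom C B, h.comp f = g) ↔
      (∀ S : Set B, ∃ b, IsLUB S b) := by
  constructor
  · -- injectivity implies completeness, via the Stone embedding
    intro hinj
    set I := {J : Order.Ideal B // Order.Ideal.IsPrime J} with hI
    have key : ∀ {x y : B} (J : I), x ⊔ y ∉ (J : Order.Ideal B) ↔
        x ∉ (J : Order.Ideal B) ∨ y ∉ (J : Order.Ideal B) := by
      intro x y J
      rw [← not_and_or]
      constructor
      · intro h h'; exact h (Order.Ideal.sup_mem h'.1 h'.2)
      · intro h h'; exact h ⟨(J : Order.Ideal B).lower le_sup_left h',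
          (J : Order.Ideal B).lower le_sup_right h'⟩
    have keyinf : ∀ {x y : B} (J : I), x ⊓ y ∉ (J : Order.Ideal B) ↔
        x ∉ (J : Order.Ideal B) ∧ y ∉ (J : Order.Ideal B) := by
      intro x y J
      constructor
      · intro h
        exact ⟨fun h' => h ((J : Order.Ideal B).lower inf_le_left h'),
          fun h' => h ((J : Order.Ideal B).lower inf_le_right h')⟩
      · intro h h'
        rcases J.2.mem_or_mem h' with h'' | h'' <;> [exact h.1 h''; exact h.2 h'']
    set σ : BoundedLatticeHom B (Set I) :=
      { toFun := fun b => {J : I | b ∉ (J : Order.Ideal B)}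
        map_sup' := fun x y => by ext J; simpa using key J
        map_inf' := fun x y => by ext J; simpa using keyinf J
        map_top' := by
          ext J; simp only [Set.mem_setOf_eq, Set.top_eq_univ, Set.mem_univ, iff_true]
          exact fun h => J.2.toIsProper.top_notMem h
        map_bot' := by
          ext J; simp only [Set.mem_setOf_eq, Set.bot_eq_empty, Set.mem_empty_iff_false,
            iff_false, not_not]
          exact (J : Order.Ideal B).bot_mem } with hσ
    have σsep : ∀ {x y : B}, ¬ x ≤ y → ∃ J : I, y ∈ (J : Order.Ideal B) ∧
        x ∉ (J : Order.Ideal B) := by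
      intro x y hxy
      have hdisj : Disjoint ((Order.PFilter.principal x : Order.PFilter B) : Set B)
          ((Order.Ideal.principal y : Order.Ideal B) : Set B) := by
        rw [Set.disjoint_left]
        intro z hz hz'
        exact hxy (le_trans (Order.PFilter.mem_principal.1 hz)
          (Order.Ideal.mem_principal.1 hz'))
      obtain ⟨J, hJp, hJy, hJd⟩ := DistribLattice.prime_ideal_of_disjoint_filter_ideal hdisj
      refine ⟨⟨J, hJp⟩, hJy (Order.Ideal.mem_principal.2 le_rfl), ?_⟩
      exact fun h => Set.disjoint_left.1 hJd (Order.PFilter.mem_principal.2 le_rfl) h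
    have σinj : Function.Injective σ := by
      intro x y hxy
      by_contra hne
      rcases not_and_or.1 (fun h : x ≤ y ∧ y ≤ x => hne (le_antisymm h.1 h.2)) with h | h
      · obtain ⟨J, hJy, hJx⟩ := σsep h
        have : J ∈ σ x := hJx
        rw [hxy] at this
        exact this hJy
      · obtain ⟨J, hJx, hJy⟩ := σsep h
        have : J ∈ σ y := hJy
        rw [← hxy] at this
        exact this hJx
    obtain ⟨h, hh⟩ := hinj B (Set I) σ σinj (BoundedLatticeHom.id B)
    have hret : ∀ x : B, h (σ x) = x := fun x => DFunLike.congr_fun hh x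
    intro S
    refine ⟨h (⋃ s ∈ S, σ s), ?_, ?_⟩
    · intro s hs
      have : σ s ≤ ⋃ s ∈ S, σ s := le_biSup (fun s => (σ s : Set I)) hs
      calc s = h (σ s) := (hret s).symm
        _ ≤ h (⋃ s ∈ S, σ s) := OrderHomClass.mono h this
    · intro ub hub
      have : (⋃ s ∈ S, σ s) ≤ σ ub := by
        refine iSup₂_le fun s hs => OrderHomClass.mono σ (hub hs)
      calc h (⋃ s ∈ S, σ s) ≤ h (σ ub) := OrderHomClass.mono h this
        _ = ub := hret ub
  · -- completeness implies injectivity (Sikorski)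
    intro hB A C _ _ f hf g
    set S : Set (Set (C × B)) := {p | Good f g p} with hS
    have hchain : ∀ c ⊆ S, IsChain (· ⊆ ·) c → c.Nonempty →
        ∃ ub ∈ S, ∀ s ∈ c, s ⊆ ub := by
      intro c hc hch ⟨p₀, hp₀⟩
      refine ⟨⋃₀ c, ⟨fun a => Set.mem_sUnion.2 ⟨p₀, hp₀, (hc hp₀).1 a⟩, ?_, ?_, ?_⟩,
        fun s hs => Set.subset_sUnion_of_mem hs⟩
      · rintro x b₁ b₂ ⟨p₁, hp₁, h₁⟩ ⟨p₂, hp₂, h₂⟩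
        rcases hch.total hp₁ hp₂ with h | h
        · exact (hc hp₂).2.1 (h h₁) h₂
        · exact (hc hp₁).2.1 h₁ (h h₂)
      · rintro c₁ b₁ c₂ b₂ ⟨p₁, hp₁, h₁⟩ ⟨p₂, hp₂, h₂⟩
        rcases hch.total hp₁ hp₂ with h | h
        · exact ⟨p₂, hp₂, (hc hp₂).2.2.1 (h h₁) h₂⟩
        · exact ⟨p₁, hp₁, (hc hp₁).2.2.1 h₁ (h h₂)⟩
      · rintro x b ⟨p₁, hp₁, h₁⟩
        exact ⟨p₁, hp₁, (hc hp₁).2.2.2 h₁⟩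
    have hp₀ : {q : C × B | ∃ a, q = (f a, g a)} ∈ S := by
      refine ⟨fun a => ⟨a, rfl⟩, ?_, ?_, ?_⟩
      · rintro x b₁ b₂ ⟨a₁, ha₁⟩ ⟨a₂, ha₂⟩
        simp only [Prod.mk.injEq] at ha₁ ha₂
        obtain ⟨hx1, hb1⟩ := ha₁
        obtain ⟨hx2, hb2⟩ := ha₂
        rw [hb1, hb2, hf (hx1.symm.trans hx2)]
      · rintro c₁ b₁ c₂ b₂ ⟨a₁, ha₁⟩ ⟨a₂, ha₂⟩
        simp only [Prod.mk.injEq] at ha₁ ha₂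
        exact ⟨a₁ ⊔ a₂, by simp [ha₁.1, ha₂.1, ha₁.2, ha₂.2]⟩
      · rintro x b ⟨a, ha⟩
        simp only [Prod.mk.injEq] at ha
        exact ⟨aᶜ, by simp [ha.1, ha.2, map_compl']⟩
    obtain ⟨m, -, hm⟩ := zorn_subset_nonempty S hchain _ hp₀
    have hmS : Good f g m := hm.1
    have htotal : ∀ c : C, ∃ b, (c, b) ∈ m := by
      intro c
      obtain ⟨p', hp', hsub, b', hb'⟩ := hmS.extend hB c
      have : p' = m := subset_antisymm (hm.2 hp' hsub) hsub
      exact ⟨b', this ▸ hb'⟩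
    choose h0 hh0 using htotal
    refine ⟨{ toFun := h0
              map_sup' := fun x y => hmS.2.1 (hh0 _) (hmS.2.2.1 (hh0 x) (hh0 y))
              map_inf' := fun x y => hmS.2.1 (hh0 _) (hmS.inf_mem (hh0 x) (hh0 y))
              map_top' := hmS.2.1 (hh0 _) hmS.top_mem
              map_bot' := hmS.2.1 (hh0 _) hmS.bot_mem }, ?_⟩
    ext a
    exact hmS.2.1 (hh0 (f a)) (hmS.1 a)
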